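/- Let 0 ≤ L ≤ b, 0 < r < R' < ∞, τ₁ ≥ 0, σ₁ ≥ 0 and r ≤ ρ₁ ≤ R' with ρ₁ < ∞. Let α = γ_{b,r} ∧ γ_{L,R'} and β = (δ_{τ₁} ⊗ I_{σ₁} ⊗ γ_{0,ρ₁}) ∧ δ_0, and write Y = ((b−L)/(R'−r))·r + b. Then hdev(α, β) = max( 0, τ₁·1{σ₁ ≥ Y} − [σ₁ − b]⁺/r, τ₁·1{Y ≥ σ₁} + [Y − σ₁]⁺/ρ₁ − (b−L)/(R'−r) ), where [x]⁺ = max(x, 0) and 1{C} is 1 if condition C holds and 0 otherwise. -/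

import Mathlib

open scoped ENNReal
open Classical

noncomputable section

/-- Burst-delay function `δ_T`: `0` for `t ≤ T`, `+∞` for `t > T`. -/
def bdelay (T : ℝ) : ℝ → ℝ≥0∞ := fun t => if t ≤ T then 0 else ⊤

/-- Window function `I_w`: `w` at `t = 0`, `+∞` for `t > 0` (and `0` for `t < 0`). -/
def wndw (w : ℝ≥0∞) : ℝ → ℝ≥0∞ := fun t => if t < 0 then 0 else if t = 0 then w else ⊤

/-- Token-bucket curve `γ_{b,r}`: `b + r·t` for `t > 0`, `0` for `t ≤ 0`. -/
def tbkt (b r : ℝ≥0∞) : ℝ → ℝ≥0∞ := fun t => if t ≤ 0 then 0 else b + r * ENNReal.ofReal t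

/-- Min-plus convolution `(f ⊗ g)(t) = inf_{0 ≤ u ≤ t} (f(t − u) + g(u))` for `t ≥ 0`,
extended by `0` on negative times. -/
def mconv (f g : ℝ → ℝ≥0∞) : ℝ → ℝ≥0∞ :=
  fun t => if t < 0 then 0 else ⨅ u ∈ Set.Icc (0 : ℝ) t, (f (t - u) + g u)

/-- The basic MSLC building block `(δ_τ ⊗ I_σ ⊗ γ_{0,ρ}) ∧ δ_0`. -/
def mslcStep (τ : ℝ) (σ ρ : ℝ≥0∞) : ℝ → ℝ≥0∞ :=
  mconv (mconv (bdelay τ) (wndw σ)) (tbkt 0 ρ) ⊓ bdelay 0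

/-- Horizontal deviation (delay bound):
`hdev(α, β) = sup_{t ≥ 0} inf { d ≥ 0 : α(t − d) ≤ β(t) }`. -/
def hdev (α β : ℝ → ℝ≥0∞) : ℝ≥0∞ :=
  ⨆ t ∈ Set.Ici (0 : ℝ), ⨅ d ∈ {d : ℝ | 0 ≤ d ∧ α (t - d) ≤ β t}, ENNReal.ofReal d

/-- Vertical deviation (backlog bound): `vdev(α, β) = sup_{u ≥ 0} (α(u) − β(u))`
with truncated subtraction (so `x − (+∞) = 0`). -/
def vdev (α β : ℝ → ℝ≥0∞) : ℝ≥0∞ :=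
  ⨆ u ∈ Set.Ici (0 : ℝ), (α u - β u)

/-- Min-plus deconvolution `(f ⊘ g)(t) = sup_{u ≥ 0} (f(t + u) − g(u))`. -/
def mdeconv (f g : ℝ → ℝ≥0∞) : ℝ → ℝ≥0∞ :=
  fun t => ⨆ u ∈ Set.Ici (0 : ℝ), (f (t + u) - g u)

/-- FIFO leftover `(β ⊖_θ α)(t) = [β(t) − α(t − θ)]⁺` for `t > θ`, `0` for `t ≤ θ`. -/
def leftover (β α : ℝ → ℝ≥0∞) (θ : ℝ) : ℝ → ℝ≥0∞ :=
  fun t => if t ≤ θ then 0 else β t - α (t - θ)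

/-- Nondecreasing lower bound `f↑(t) = inf_{u ≥ t} f(u)`. -/
def ndlb (f : ℝ → ℝ≥0∞) : ℝ → ℝ≥0∞ := fun t => ⨅ u ∈ Set.Ici t, f u

set_option maxHeartbeats 1000000

lemma alpha_feas (L b r R' v s : ℝ) (hL : 0 ≤ L) (hb : 0 ≤ b)
    (hr : 0 < r) (hR' : 0 < R')
    (h : s ≤ 0 ∨ b + r * s ≤ v ∨ L + R' * s ≤ v) :
    (tbkt (ENNReal.ofReal b) (ENNReal.ofReal r)
       ⊓ tbkt (ENNReal.ofReal L) (ENNReal.ofReal R')) s ≤ ENNReal.ofReal v := by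
  rw [Pi.inf_apply]
  rcases le_or_gt s 0 with hs | hs
  · unfold tbkt
    rw [if_pos hs, if_pos hs]
    simp
  · rcases h with h | h | h
    · exact absurd h (not_le.mpr hs)
    · refine le_trans inf_le_left ?_
      unfold tbkt
      rw [if_neg (not_le.mpr hs), ← ENNReal.ofReal_mul hr.le,
        ← ENNReal.ofReal_add hb (mul_nonneg hr.le hs.le)]
      exact ENNReal.ofReal_le_ofReal h
    · refine le_trans inf_le_right ?_
      unfold tbkt
      rw [if_neg (not_le.mpr hs), ← ENNReal.ofReal_mul hR'.le,
        ← ENNReal.ofReal_add hL (mul_nonneg hR'.le hs.le)]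
      exact ENNReal.ofReal_le_ofReal h

lemma alpha_tight (L b r R' v s : ℝ) (hb : 0 ≤ b) (hL : 0 ≤ L) (hv : 0 ≤ v)
    (hr : 0 ≤ r) (hR' : 0 ≤ R')
    (hs : 0 < s) (h1 : v < b + r * s) (h2 : v < L + R' * s) :
    ¬ ((tbkt (ENNReal.ofReal b) (ENNReal.ofReal r)
       ⊓ tbkt (ENNReal.ofReal L) (ENNReal.ofReal R')) s ≤ ENNReal.ofReal v) := by
  rw [Pi.inf_apply, not_le, lt_inf_iff]
  constructor
  · unfold tbkt
    rw [if_neg (not_le.mpr hs), ← ENNReal.ofReal_mul hr,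
      ← ENNReal.ofReal_add hb (mul_nonneg hr hs.le)]
    exact (ENNReal.ofReal_lt_ofReal_iff (lt_of_le_of_lt hv h1)).mpr h1
  · unfold tbkt
    rw [if_neg (not_le.mpr hs), ← ENNReal.ofReal_mul hR',
      ← ENNReal.ofReal_add hL (mul_nonneg hR' hs.le)]
    exact (ENNReal.ofReal_lt_ofReal_iff (lt_of_le_of_lt hv h2)).mpr h2

lemma mconv_eval (f g : ℝ → ℝ≥0∞) (t : ℝ) (ht : 0 ≤ t) :
    mconv f g t = ⨅ u ∈ Set.Icc (0 : ℝ) t, (f (t - u) + g u) := by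
  unfold mconv
  rw [if_neg (not_lt.mpr ht)]

lemma mconv_bdelay_wndw (τ : ℝ) (σ : ℝ≥0∞) (t : ℝ) (ht : 0 ≤ t) :
    mconv (bdelay τ) (wndw σ) t = bdelay τ t + σ := by
  unfold mconv
  rw [if_neg (not_lt.mpr ht)]
  apply le_antisymm
  · refine le_trans (iInf₂_le 0 ⟨le_rfl, ht⟩) ?_
    simp [wndw]
  · refine le_iInf₂ fun u hu => ?_
    rcases hu.1.lt_or_eq with h | h
    · have hw : wndw σ u = ⊤ := by
        unfold wndw
        rw [if_neg (not_lt.mpr h.le), if_neg (ne_of_gt h)]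
      rw [hw, add_top]
      exact le_top
    · simp [← h, wndw]

lemma mconv_step2 (τ : ℝ) (σ ρ : ℝ≥0∞) (hτ : 0 ≤ τ) (t : ℝ) (ht : 0 ≤ t) :
    mconv (mconv (bdelay τ) (wndw σ)) (tbkt 0 ρ) t
      = if t ≤ τ then σ else σ + ρ * ENNReal.ofReal (t - τ) := by
  rw [mconv_eval (mconv (bdelay τ) (wndw σ)) (tbkt 0 ρ) t ht]
  split_ifs with htτ
  · apply le_antisymm
    · refine le_trans (iInf₂_le 0 ⟨le_rfl, ht⟩) ?_
      rw [sub_zero, mconv_bdelay_wndw τ σ t ht]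
      have h1 : bdelay τ t = 0 := if_pos htτ
      have h2 : tbkt 0 ρ 0 = 0 := if_pos le_rfl
      rw [h1, h2, zero_add, add_zero]
    · refine le_iInf₂ fun u hu => ?_
      have h1 : 0 ≤ t - u := by linarith [hu.2]
      rw [mconv_bdelay_wndw τ σ _ h1]
      calc σ ≤ bdelay τ (t - u) + σ := le_add_self
        _ ≤ _ := le_self_add
  · push_neg at htτ
    apply le_antisymm
    · refine le_trans (iInf₂_le (t - τ) ⟨by linarith, by linarith⟩) ?_
      rw [show t - (t - τ) = τ by ring, mconv_bdelay_wndw τ σ τ hτ]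
      have h1 : bdelay τ τ = 0 := if_pos le_rfl
      have h2 : tbkt 0 ρ (t - τ) = ρ * ENNReal.ofReal (t - τ) := by
        unfold tbkt
        rw [if_neg (by linarith : ¬ t - τ ≤ 0), zero_add]
      rw [h1, h2, zero_add]
    · refine le_iInf₂ fun u hu => ?_
      have h1 : 0 ≤ t - u := by linarith [hu.2]
      rw [mconv_bdelay_wndw τ σ _ h1]
      rcases le_or_gt (t - u) τ with h2 | h2
      · have hu0 : t - τ ≤ u := by linarith
        have h3 : tbkt 0 ρ u = ρ * ENNReal.ofReal u := by
          unfold tbkt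
          rw [if_neg (by linarith : ¬ u ≤ 0), zero_add]
        rw [h3]
        refine add_le_add le_add_self ?_
        exact mul_le_mul_right (ENNReal.ofReal_le_ofReal hu0) ρ
      · have hb : bdelay τ (t - u) = ⊤ := if_neg (not_le.mpr h2)
        rw [hb, top_add, top_add]
        exact le_top
  
lemma mslc_eval (τ : ℝ) (σ ρ : ℝ≥0∞) (hτ : 0 ≤ τ) (t : ℝ) :
    mslcStep τ σ ρ t =
      if t ≤ 0 then 0 else if t ≤ τ then σ else σ + ρ * ENNReal.ofReal (t - τ) := by
  unfold mslcStep
  rw [Pi.inf_apply]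
  rcases lt_trichotomy t 0 with h | h | h
  · rw [if_pos h.le]
    have h1 : mconv (mconv (bdelay τ) (wndw σ)) (tbkt 0 ρ) t = 0 := by
      unfold mconv; rw [if_pos h]
    rw [h1]
    simp
  · subst h
    rw [if_pos le_rfl, mconv_step2 τ σ ρ hτ 0 le_rfl, if_pos hτ]
    have : bdelay 0 0 = 0 := if_pos le_rfl
    rw [this]
    simp
  · rw [if_neg (not_le.mpr h), mconv_step2 τ σ ρ hτ t h.le]
    have hb : bdelay 0 t = ⊤ := if_neg (not_le.mpr h)
    rw [hb, inf_top_eq]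

lemma upper_pt (L b r R' v t M : ℝ) (hL : 0 ≤ L) (hb : 0 ≤ b) (hr : 0 < r) (hR' : 0 < R')
    (β : ℝ → ℝ≥0∞) (hv : 0 ≤ v) (hM : 0 ≤ M)
    (hβ : β t = ENNReal.ofReal v)
    (hkey : t - (v - b) / r ≤ M ∨ t - (v - L) / R' ≤ M) :
    (⨅ d ∈ {d : ℝ | 0 ≤ d ∧
        (tbkt (ENNReal.ofReal b) (ENNReal.ofReal r)
          ⊓ tbkt (ENNReal.ofReal L) (ENNReal.ofReal R')) (t - d) ≤ β t},
      ENNReal.ofReal d) ≤ ENNReal.ofReal M := by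
  have main : ∀ e : ℝ, t - e ≤ M →
      (∀ s : ℝ, 0 < s → s ≤ e → b + r * s ≤ v ∨ L + R' * s ≤ v) →
      (⨅ d ∈ {d : ℝ | 0 ≤ d ∧
        (tbkt (ENNReal.ofReal b) (ENNReal.ofReal r)
          ⊓ tbkt (ENNReal.ofReal L) (ENNReal.ofReal R')) (t - d) ≤ β t},
      ENNReal.ofReal d) ≤ ENNReal.ofReal M := by
    intro e heM hse
    set s := min t (max e 0) with hs
    have hd0 : 0 ≤ t - s := by
      have := min_le_left t (max e 0); linarith
    have hdM : t - s ≤ M := by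
      rcases le_total t (max e 0) with h | h
      · rw [hs, min_eq_left h]; linarith
      · rw [hs, min_eq_right h]
        have := le_max_left e 0
        linarith
    have hfeas : (tbkt (ENNReal.ofReal b) (ENNReal.ofReal r)
          ⊓ tbkt (ENNReal.ofReal L) (ENNReal.ofReal R')) (t - (t - s)) ≤ β t := by
      rw [hβ, show t - (t - s) = s by ring]
      apply alpha_feas L b r R' v s hL hb hr hR'
      rcases le_or_gt s 0 with h | h
      · exact Or.inl h
      · refine Or.inr (hse s h ?_)
        have h6 : s ≤ max e 0 := min_le_right t (max e 0)
        rcases le_total e 0 with he | he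
        · rw [max_eq_right he] at h6; linarith
        · rw [max_eq_left he] at h6; exact h6
    exact le_trans (iInf₂_le (t - s) ⟨hd0, hfeas⟩) (ENNReal.ofReal_le_ofReal hdM)
  rcases hkey with hk | hk
  · refine main ((v - b) / r) hk ?_
    intro s hs hse
    left
    have h1 : (v - b) / r * r = v - b := div_mul_cancel₀ _ hr.ne'
    nlinarith
  · refine main ((v - L) / R') hk ?_
    intro s hs hse
    right
    have h1 : (v - L) / R' * R' = v - L := div_mul_cancel₀ _ hR'.ne'
    nlinarith

/-- delay bound for a shaped arrival curve `γ_{b,r} ∧ γ_{L,R'}` and a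
single-step MSLC service curve with finite rate `ρ₁`. -/
theorem stmt6 (L b r R' tau1 sig1 rho1 : ℝ)
    (hL : 0 ≤ L) (hLb : L ≤ b) (hr : 0 < r) (hrR : r < R')
    (htau : 0 ≤ tau1) (hsig : 0 ≤ sig1) (hrrho : r ≤ rho1) (hrhoR : rho1 ≤ R') :
    hdev (tbkt (ENNReal.ofReal b) (ENNReal.ofReal r)
            ⊓ tbkt (ENNReal.ofReal L) (ENNReal.ofReal R'))
         (mslcStep tau1 (ENNReal.ofReal sig1) (ENNReal.ofReal rho1))
      = ENNReal.ofReal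
          (max 0 (max
            (tau1 * (if (b - L) / (R' - r) * r + b ≤ sig1 then 1 else 0)
              - max (sig1 - b) 0 / r)
            (tau1 * (if sig1 ≤ (b - L) / (R' - r) * r + b then 1 else 0)
              + max ((b - L) / (R' - r) * r + b - sig1) 0 / rho1
              - (b - L) / (R' - r)))) := by
  have hb0 : 0 ≤ b := hL.trans hLb
  have hR' : 0 < R' := hr.trans hrR
  have hrho : 0 < rho1 := hr.trans_le hrrho
  have hrr : 0 < R' - r := sub_pos.mpr hrR
  set s0 := (b - L) / (R' - r) with hs0d
  have hs0 : s0 * (R' - r) = b - L := div_mul_cancel₀ _ hrr.ne'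
  have hs0nn : 0 ≤ s0 := div_nonneg (by linarith) hrr.le
  set Yv := s0 * r + b with hYvd
  have hs0r : s0 * r = Yv - b := by rw [hYvd]; ring
  have hs0R : s0 * R' = Yv - L := by rw [hYvd]; linear_combination hs0
  have hYvRr : Yv * (R' - r) = b * R' - r * L := by
    rw [hYvd]; linear_combination r * hs0
  have hYb : b ≤ Yv := by nlinarith
  have hYL : L ≤ Yv := hLb.trans hYb
  have hYv0 : 0 ≤ Yv := hb0.trans hYb
  clear_value Yv
  clear hYvd
  clear_value s0
  clear hs0d hs0
  set Mr := max 0 (max (tau1 * (if Yv ≤ sig1 then 1 else 0) - max (sig1 - b) 0 / r)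
      (tau1 * (if sig1 ≤ Yv then 1 else 0) + max (Yv - sig1) 0 / rho1 - s0)) with hMrd
  have hMr0 : (0:ℝ) ≤ Mr := le_max_left _ _
  clear_value Mr
  unfold hdev
  apply le_antisymm
  · apply iSup₂_le
    intro t ht
    rw [Set.mem_Ici] at ht
    rcases eq_or_lt_of_le ht with h0 | hpos
    · have hmem : (0:ℝ) ∈ {d : ℝ | 0 ≤ d ∧
          (tbkt (ENNReal.ofReal b) (ENNReal.ofReal r)
            ⊓ tbkt (ENNReal.ofReal L) (ENNReal.ofReal R')) (t - d)
            ≤ mslcStep tau1 (ENNReal.ofReal sig1) (ENNReal.ofReal rho1) t} := by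
        refine ⟨le_rfl, ?_⟩
        rw [sub_zero, ← h0]
        have hα0 : (tbkt (ENNReal.ofReal b) (ENNReal.ofReal r)
            ⊓ tbkt (ENNReal.ofReal L) (ENNReal.ofReal R')) 0 = 0 := by
          rw [Pi.inf_apply]
          unfold tbkt
          rw [if_pos le_rfl, if_pos le_rfl]
          simp
        rw [hα0]
        exact zero_le
      refine le_trans (iInf₂_le 0 hmem) ?_
      simp
    · by_cases hcase : t ≤ tau1
      · -- v = sig1
        have hβ : mslcStep tau1 (ENNReal.ofReal sig1) (ENNReal.ofReal rho1) t
            = ENNReal.ofReal sig1 := by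
          rw [mslc_eval _ _ _ htau, if_neg (not_le.mpr hpos), if_pos hcase]
        refine upper_pt L b r R' sig1 t Mr hL hb0 hr hR' _ hsig hMr0 hβ ?_
        by_cases hY : Yv ≤ sig1
        · left
          have hq2 : max (sig1 - b) 0 = sig1 - b := max_eq_left (by linarith)
          have hMr2 : tau1 - (sig1 - b) / r ≤ Mr := by
            rw [hMrd, if_pos hY, hq2, mul_one]
            exact le_trans (le_max_left _ _) (le_max_right _ _)
          linarith
        · right
          push_neg at hY
          have hm3 : max (Yv - sig1) 0 = Yv - sig1 := max_eq_left (by linarith)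
          have hu3 : (Yv - sig1) / rho1 * rho1 = Yv - sig1 := div_mul_cancel₀ _ hrho.ne'
          have hu3nn : 0 ≤ (Yv - sig1) / rho1 := div_nonneg (by linarith) hrho.le
          have he2 : (sig1 - L) / R' * R' = sig1 - L := div_mul_cancel₀ _ hR'.ne'
          have hstep : t - (sig1 - L) / R' ≤ tau1 * 1 + (Yv - sig1) / rho1 - s0 := by
            nlinarith [mul_nonneg hu3nn (sub_nonneg.mpr hrhoR), hu3, he2, hs0R]
          have hMr3 : tau1 * 1 + (Yv - sig1) / rho1 - s0 ≤ Mr := by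
            rw [hMrd, if_pos hY.le, hm3]
            exact le_trans (le_max_right _ _) (le_max_right _ _)
          linarith
      · push_neg at hcase
        have htt : 0 ≤ t - tau1 := by linarith
        have hvnn : 0 ≤ sig1 + rho1 * (t - tau1) := by nlinarith
        have hβ : mslcStep tau1 (ENNReal.ofReal sig1) (ENNReal.ofReal rho1) t
            = ENNReal.ofReal (sig1 + rho1 * (t - tau1)) := by
          rw [mslc_eval _ _ _ htau, if_neg (not_le.mpr hpos), if_neg (not_le.mpr hcase),
            ENNReal.ofReal_add hsig (mul_nonneg hrho.le htt), ENNReal.ofReal_mul hrho.le]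
        refine upper_pt L b r R' (sig1 + rho1 * (t - tau1)) t Mr hL hb0 hr hR' _ hvnn hMr0 hβ ?_
        by_cases hY : Yv ≤ sig1
        · left
          have hq : (sig1 - b) / r * r = sig1 - b := div_mul_cancel₀ _ hr.ne'
          have he1 : (sig1 + rho1 * (t - tau1) - b) / r * r = sig1 + rho1 * (t - tau1) - b :=
            div_mul_cancel₀ _ hr.ne'
          have hq2 : max (sig1 - b) 0 = sig1 - b := max_eq_left (by linarith)
          have hstep : t - (sig1 + rho1 * (t - tau1) - b) / r ≤ tau1 * 1 - (sig1 - b) / r := by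
            nlinarith [mul_nonneg (sub_nonneg.mpr hrrho) htt, he1, hq]
          have hMr2 : tau1 * 1 - (sig1 - b) / r ≤ Mr := by
            rw [hMrd, if_pos hY, hq2]
            exact le_trans (le_max_left _ _) (le_max_right _ _)
          linarith
        · push_neg at hY
          have hm3 : max (Yv - sig1) 0 = Yv - sig1 := max_eq_left (by linarith)
          have hu3 : (Yv - sig1) / rho1 * rho1 = Yv - sig1 := div_mul_cancel₀ _ hrho.ne'
          have hu3nn : 0 ≤ (Yv - sig1) / rho1 := div_nonneg (by linarith) hrho.le
          have hMr3 : tau1 * 1 + (Yv - sig1) / rho1 - s0 ≤ Mr := by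
            rw [hMrd, if_pos hY.le, hm3]
            exact le_trans (le_max_right _ _) (le_max_right _ _)
          by_cases hYv : Yv ≤ sig1 + rho1 * (t - tau1)
          · left
            have he1 : (sig1 + rho1 * (t - tau1) - b) / r * r = sig1 + rho1 * (t - tau1) - b :=
              div_mul_cancel₀ _ hr.ne'
            have h4 : 0 ≤ t - tau1 - (Yv - sig1) / rho1 := by nlinarith [hu3]
            have hstep : t - (sig1 + rho1 * (t - tau1) - b) / r
                ≤ tau1 * 1 + (Yv - sig1) / rho1 - s0 := by
              nlinarith [mul_nonneg (sub_nonneg.mpr hrrho) h4, he1, hu3, hs0r]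
            linarith
          · right
            push_neg at hYv
            have he2 : (sig1 + rho1 * (t - tau1) - L) / R' * R' = sig1 + rho1 * (t - tau1) - L :=
              div_mul_cancel₀ _ hR'.ne'
            have h4 : 0 ≤ (Yv - sig1) / rho1 - (t - tau1) := by nlinarith [hu3]
            have hstep : t - (sig1 + rho1 * (t - tau1) - L) / R'
                ≤ tau1 * 1 + (Yv - sig1) / rho1 - s0 := by
              nlinarith [mul_nonneg (sub_nonneg.mpr hrhoR) h4, he2, hu3, hs0R]
            linarith
  · by_cases hY : Yv ≤ sig1
    · -- Case A: witness tau1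
      have hbσ : b ≤ sig1 := hYb.trans hY
      have hq : (sig1 - b) / r * r = sig1 - b := div_mul_cancel₀ _ hr.ne'
      have hqnn : 0 ≤ (sig1 - b) / r := div_nonneg (by linarith) hr.le
      have hq2 : max (sig1 - b) 0 = sig1 - b := max_eq_left (by linarith)
      have hqL : sig1 - L ≤ R' * ((sig1 - b) / r) := by
        rw [mul_div_assoc', le_div_iff₀ hr]
        nlinarith [hYvRr, mul_nonneg (sub_nonneg.mpr hY) hrr.le]
      refine le_iSup₂_of_le tau1 (Set.mem_Ici.mpr htau) ?_
      refine le_iInf₂ fun d hd => ?_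
      obtain ⟨hd0, hfeas⟩ := hd
      refine ENNReal.ofReal_le_ofReal ?_
      have hT2d : tau1 - (sig1 - b) / r ≤ d := by
        rcases eq_or_lt_of_le htau with h0 | hτpos
        · linarith
        · by_contra hcon
          push_neg at hcon
          have hspos : 0 < tau1 - d := by linarith
          rw [mslc_eval _ _ _ htau, if_neg (not_le.mpr hτpos), if_pos le_rfl] at hfeas
          have hlt : (sig1 - b) / r < tau1 - d := by linarith
          refine alpha_tight L b r R' sig1 (tau1 - d) hb0 hL hsig hr.le hR'.le hspos ?_ ?_ hfeas
          · nlinarith [mul_lt_mul_of_pos_left hlt hr, hq]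
          · nlinarith [mul_lt_mul_of_pos_left hlt hR', hqL]
      rw [hMrd]
      refine max_le hd0 (max_le ?_ ?_)
      · rw [if_pos hY, hq2, mul_one]
        linarith
      · have hm3 : max (Yv - sig1) 0 = 0 := max_eq_right (by linarith)
        rw [hm3]
        by_cases h2 : sig1 ≤ Yv
        · rw [if_pos h2]
          have hEq : Yv = sig1 := le_antisymm hY h2
          have hs0q : s0 = (sig1 - b) / r := by
            have h5 : s0 * r = (sig1 - b) / r * r := by rw [hq, hs0r, hEq]
            exact mul_right_cancel₀ hr.ne' h5
          have hz : (0:ℝ) / rho1 = 0 := zero_div _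
          rw [hz, hs0q, mul_one]
          linarith
        · rw [if_neg h2]
          have hz : (0:ℝ) / rho1 = 0 := zero_div _
          rw [hz, mul_zero]
          linarith
    · push_neg at hY
      have hu3 : (Yv - sig1) / rho1 * rho1 = Yv - sig1 := div_mul_cancel₀ _ hrho.ne'
      have hu3pos : 0 < (Yv - sig1) / rho1 := div_pos (by linarith) hrho
      set t0 := tau1 + (Yv - sig1) / rho1 with ht0d
      have ht0 : tau1 < t0 := by rw [ht0d]; linarith
      have ht0pos : 0 < t0 := by linarith
      have hβ : mslcStep tau1 (ENNReal.ofReal sig1) (ENNReal.ofReal rho1) t0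
          = ENNReal.ofReal Yv := by
        rw [mslc_eval _ _ _ htau, if_neg (not_le.mpr ht0pos), if_neg (not_le.mpr ht0),
          show t0 - tau1 = (Yv - sig1) / rho1 by rw [ht0d]; ring,
          ← ENNReal.ofReal_mul hrho.le,
          ← ENNReal.ofReal_add hsig (by nlinarith [hu3]),
          show sig1 + rho1 * ((Yv - sig1) / rho1) = Yv by nlinarith [hu3]]
      refine le_iSup₂_of_le t0 (Set.mem_Ici.mpr ht0pos.le) ?_
      refine le_iInf₂ fun d hd => ?_
      obtain ⟨hd0, hfeas⟩ := hd
      refine ENNReal.ofReal_le_ofReal ?_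
      have hT3d : tau1 + (Yv - sig1) / rho1 - s0 ≤ d := by
        by_contra hcon
        push_neg at hcon
        have h7 : s0 < t0 - d := by rw [ht0d]; linarith
        have hspos : 0 < t0 - d := by linarith
        rw [hβ] at hfeas
        refine alpha_tight L b r R' Yv (t0 - d) hb0 hL hYv0 hr.le hR'.le hspos ?_ ?_ hfeas
        · nlinarith [mul_lt_mul_of_pos_left h7 hr, hs0r]
        · nlinarith [mul_lt_mul_of_pos_left h7 hR', hs0R]
      rw [hMrd]
      refine max_le hd0 (max_le ?_ ?_)
      · rw [if_neg (not_le.mpr hY)]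
        have h8 : 0 ≤ max (sig1 - b) 0 / r := div_nonneg (le_max_right _ _) hr.le
        rw [mul_zero]
        linarith
      · rw [if_pos hY.le, max_eq_left (by linarith : (0:ℝ) ≤ Yv - sig1), mul_one]
        linarith
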